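/- Two complex n×n matrices have intersecting orbit closures under the conjugation action of GLₙ(ℂ) if and only if they have the same characteristic polynomial. -/

import Mathlib

open Matrix Polynomial Filter Topology Finset
open Module


section helpers
variable {n : ℕ} {R : Type*} [CommRing R]

lemma conj_smul_one_sub {u v A : Matrix (Fin n) (Fin n) R} (huv : u * v = 1) (z : R) :
    u * (z • (1 : Matrix (Fin n) (Fin n) R) - A) * v = z • 1 - u * A * v := by
  rw [mul_sub, sub_mul, mul_smul_comm, mul_one, smul_mul_assoc, huv]

lemma det_conj_eq {u v A : Matrix (Fin n) (Fin n) R} (huv : u * v = 1) :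
    (u * A * v).det = A.det := by
  have h1 : u.det * v.det = 1 := by rw [← det_mul, huv, det_one]
  rw [det_mul, det_mul]
  calc u.det * A.det * v.det = A.det * (u.det * v.det) := by ring
  _ = A.det := by rw [h1, mul_one]

lemma charpoly_conj_eq {u v A : Matrix (Fin n) (Fin n) R} (huv : u * v = 1) :
    (u * A * v).charpoly = A.charpoly := by
  have hmap : (u.map C) * (v.map C) = 1 := by
    rw [← Matrix.map_mul, huv]; ext i j; simp [Matrix.one_apply, apply_ite]
  have hc : charmatrix (u * A * v) = (u.map C) * charmatrix A * (v.map C) := by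
    unfold charmatrix
    rw [mul_sub, sub_mul]
    have hs : (u.map C) * (Matrix.scalar (Fin n) (X : R[X])) = (Matrix.scalar (Fin n) (X : R[X])) * (u.map C) :=
      (Matrix.scalar_commute (X : R[X]) (fun r => Commute.all _ _) _).symm
    congr 1
    · rw [hs, mul_assoc, hmap, mul_one]
    · simp only [RingHom.mapMatrix_apply, Matrix.map_mul]
  rw [Matrix.charpoly, hc, det_conj_eq hmap]; rfl
end helpers


variable {n : ℕ}

lemma eval_charpoly' (z : ℂ) (A : Matrix (Fin n) (Fin n) ℂ) :
    A.charpoly.eval z = (z • (1 : Matrix (Fin n) (Fin n) ℂ) - A).det := by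
  rw [Matrix.charpoly, ← Polynomial.coe_evalRingHom, RingHom.map_det]
  congr 1
  ext i j
  by_cases h : i = j
  · subst h; simp [charmatrix_apply_eq, Matrix.one_apply]
  · simp [charmatrix_apply_ne _ _ _ h, Matrix.one_apply, h]

lemma charpoly_eq_of_mem_closure {A M : Matrix (Fin n) (Fin n) ℂ}
    (hM : M ∈ closure {C : Matrix (Fin n) (Fin n) ℂ |
      ∃ g : GL (Fin n) ℂ, C = (g : Matrix (Fin n) (Fin n) ℂ) * A *
        ((g⁻¹ : GL (Fin n) ℂ) : Matrix (Fin n) (Fin n) ℂ)}) :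
    M.charpoly = A.charpoly := by
  apply Polynomial.funext
  intro z
  rw [eval_charpoly', eval_charpoly']
  have hsub : closure {C : Matrix (Fin n) (Fin n) ℂ |
      ∃ g : GL (Fin n) ℂ, C = (g : Matrix (Fin n) (Fin n) ℂ) * A *
        ((g⁻¹ : GL (Fin n) ℂ) : Matrix (Fin n) (Fin n) ℂ)} ⊆
      {N : Matrix (Fin n) (Fin n) ℂ |
        (z • (1 : Matrix (Fin n) (Fin n) ℂ) - N).det = (z • 1 - A).det} := by
    apply closure_minimal
    · rintro C ⟨g, rfl⟩
      have huv : (g : Matrix (Fin n) (Fin n) ℂ) * ((g⁻¹ : GL (Fin n) ℂ) : Matrix (Fin n) (Fin n) ℂ) = 1 := by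
        rw [← Units.val_mul, mul_inv_cancel, Units.val_one]
      simp only [Set.mem_setOf_eq]
      rw [← conj_smul_one_sub huv z, det_conj_eq huv]
    · apply isClosed_eq _ continuous_const
      exact ((continuous_const.sub continuous_id).matrix_det)
  exact hsub hM

lemma conj_mem_closure (g : GL (Fin n) ℂ) {A M : Matrix (Fin n) (Fin n) ℂ}
    (hM : M ∈ closure {C : Matrix (Fin n) (Fin n) ℂ |
      ∃ h : GL (Fin n) ℂ, C = (h : Matrix (Fin n) (Fin n) ℂ) * A *
        ((h⁻¹ : GL (Fin n) ℂ) : Matrix (Fin n) (Fin n) ℂ)}) :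
    (g : Matrix (Fin n) (Fin n) ℂ) * M * ((g⁻¹ : GL (Fin n) ℂ) : Matrix (Fin n) (Fin n) ℂ) ∈
      closure {C : Matrix (Fin n) (Fin n) ℂ |
      ∃ h : GL (Fin n) ℂ, C = (h : Matrix (Fin n) (Fin n) ℂ) * A *
        ((h⁻¹ : GL (Fin n) ℂ) : Matrix (Fin n) (Fin n) ℂ)} := by
  have hc : Continuous (fun N : Matrix (Fin n) (Fin n) ℂ =>
      (g : Matrix (Fin n) (Fin n) ℂ) * N * ((g⁻¹ : GL (Fin n) ℂ) : Matrix (Fin n) (Fin n) ℂ)) :=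
    (continuous_const.matrix_mul continuous_id).matrix_mul continuous_const
  refine map_mem_closure (f := fun N : Matrix (Fin n) (Fin n) ℂ =>
      (g : Matrix (Fin n) (Fin n) ℂ) * N * ((g⁻¹ : GL (Fin n) ℂ) : Matrix (Fin n) (Fin n) ℂ))
    hc hM ?_
  rintro C ⟨h, rfl⟩
  refine ⟨g * h, ?_⟩
  rw [_root_.mul_inv_rev, Units.val_mul, Units.val_mul]
  noncomm_ring


lemma exists_basis_blockTriangular (n : ℕ) :
    ∀ (V : Type) [AddCommGroup V] [Module ℂ V] [FiniteDimensional ℂ V],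
      Module.finrank ℂ V = n → ∀ f : Module.End ℂ V,
      ∃ b : Basis (Fin n) ℂ V, ((LinearMap.toMatrix b b) f).BlockTriangular id := by
  induction n with
  | zero =>
    intro V _ _ _ hV f
    have hsub : Subsingleton V := Module.finrank_zero_iff.mp hV
    refine ⟨basisOfTopLeSpanOfCardEqFinrank Fin.elim0 ?_ (by simp [hV]), ?_⟩
    · intro z _
      have : z = 0 := Subsingleton.elim z 0
      simp [this]
    · intro i j _
      exact i.elim0
  | succ n ih =>
    intro V _ _ _ hV f
    have : Nontrivial V := Module.finrank_pos_iff.mp (by rw [hV]; omega)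
    obtain ⟨μ, hμ⟩ := Module.End.exists_eigenvalue f
    obtain ⟨v, hv⟩ := hμ.exists_hasEigenvector
    have hv0 : v ≠ 0 := hv.2
    set W : Submodule ℂ V := ℂ ∙ v with hWdef
    have hvW : v ∈ W := Submodule.mem_span_singleton_self v
    have hW : W ≤ W.comap f := by
      rw [hWdef, Submodule.span_singleton_le_iff_mem, Submodule.mem_comap]
      rw [hv.apply_eq_smul]
      exact Submodule.smul_mem _ _ hvW
    set f' : V ⧸ W →ₗ[ℂ] V ⧸ W := W.mapQ W f hW with hf'def
    have hfr : Module.finrank ℂ (V ⧸ W) = n := by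
      have h1 := Submodule.finrank_quotient_add_finrank W
      rw [finrank_span_singleton hv0, hV] at h1
      omega
    obtain ⟨c, hc⟩ := ih (V ⧸ W) hfr f'
    obtain ⟨s, hs⟩ := W.mkQ.exists_rightInverse_of_surjective (by rw [Submodule.range_mkQ])
    set b0 : Fin (n + 1) → V := Fin.cons v (fun i => s (c i)) with hb0def
    have hq0 : W.mkQ v = 0 := by
      rw [Submodule.mkQ_apply, Submodule.Quotient.mk_eq_zero]; exact hvW
    have hqs : ∀ x, W.mkQ (s x) = x := fun x => LinearMap.congr_fun hs x
    have hspan : ⊤ ≤ Submodule.span ℂ (Set.range b0) := by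
      intro z _
      set y : V := ∑ i, c.repr (W.mkQ z) i • s (c i) with hydef
      have hzy : W.mkQ (z - y) = 0 := by
        rw [map_sub, hydef, map_sum]
        simp only [_root_.map_smul, hqs]
        rw [c.sum_repr (W.mkQ z), sub_self]
      have hzyW : z - y ∈ W := by
        rwa [Submodule.mkQ_apply, Submodule.Quotient.mk_eq_zero] at hzy
      obtain ⟨a, ha⟩ := Submodule.mem_span_singleton.mp hzyW
      have hz : z = a • v + y := by rw [ha]; abel
      rw [hz]
      apply Submodule.add_mem
      · exact Submodule.smul_mem _ _ (Submodule.subset_span ⟨0, by rw [hb0def]; rfl⟩)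
      · apply Submodule.sum_mem
        intro i _
        exact Submodule.smul_mem _ _ (Submodule.subset_span ⟨i.succ, by rw [hb0def]; simp⟩)
    have hcard : Fintype.card (Fin (n + 1)) = Module.finrank ℂ V := by simp [hV]
    set b : Basis (Fin (n + 1)) ℂ V := basisOfTopLeSpanOfCardEqFinrank b0 hspan hcard with hbdef
    have hb : ⇑b = b0 := coe_basisOfTopLeSpanOfCardEqFinrank _ _ _
    have hbz : b 0 = v := by rw [hb, hb0def]; rfl
    have hbs : ∀ i : Fin n, b i.succ = s (c i) := by
      intro i; rw [hb, hb0def]; simp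
    have key : ∀ k : Fin n, (c.coord k) ∘ₗ W.mkQ = b.coord k.succ := by
      intro k
      apply b.ext
      intro i
      refine Fin.cases ?_ ?_ i
      · have l : (c.coord k ∘ₗ W.mkQ) (b 0) = 0 := by
          rw [LinearMap.comp_apply, hbz, hq0, map_zero]
        have r : b.coord k.succ (b 0) = 0 := by
          rw [Basis.coord_apply, Basis.repr_self, Finsupp.single_apply]
          exact if_neg (fun h => Fin.succ_ne_zero k h.symm)
        rw [l, r]
      · intro j
        have l : (c.coord k ∘ₗ W.mkQ) (b j.succ) = if j = k then 1 else 0 := by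
          rw [LinearMap.comp_apply, hbs j, hqs, Basis.coord_apply, Basis.repr_self,
            Finsupp.single_apply]
        have r : b.coord k.succ (b j.succ) = if j = k then 1 else 0 := by
          rw [Basis.coord_apply, Basis.repr_self]
          simp only [Finsupp.single_apply, Fin.succ_inj]
        rw [l, r]
    refine ⟨b, ?_⟩
    intro i j hij
    rw [LinearMap.toMatrix_apply]
    rcases Fin.eq_zero_or_eq_succ j with rfl | ⟨j', rfl⟩
    · have h0 : f (b 0) = μ • b 0 := by rw [hbz]; exact hv.apply_eq_smul
      rw [h0, _root_.map_smul, Basis.repr_self]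
      have hine : ¬((0 : Fin (n + 1)) = i) := by
        intro h; rw [← h] at hij; exact absurd hij (lt_irrefl _)
      simp [Finsupp.single_apply, hine]
    · rcases Fin.eq_zero_or_eq_succ i with rfl | ⟨i', rfl⟩
      · exact absurd hij (Fin.not_lt_zero _)
      · have hij' : j' < i' := by
          rwa [id, id, Fin.succ_lt_succ_iff] at hij
        rw [← Basis.coord_apply, ← key i', LinearMap.comp_apply, hbs j']
        have h1 : ∀ x : V, W.mkQ (f x) = f' (W.mkQ x) := by
          intro x
          rw [hf'def, Submodule.mkQ_apply, Submodule.mkQ_apply, Submodule.mapQ_apply]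
        rw [h1, hqs, Basis.coord_apply]
        have := hc hij'
        rwa [LinearMap.toMatrix_apply] at this


variable {n : ℕ}

lemma exists_conj_blockTriangular (A : Matrix (Fin n) (Fin n) ℂ) :
    ∃ g : GL (Fin n) ℂ,
      ((g : Matrix (Fin n) (Fin n) ℂ) * A *
        ((g⁻¹ : GL (Fin n) ℂ) : Matrix (Fin n) (Fin n) ℂ)).BlockTriangular id := by
  set e : Basis (Fin n) ℂ (Fin n → ℂ) := Pi.basisFun ℂ (Fin n) with hedef
  set f : Module.End ℂ (Fin n → ℂ) := Matrix.toLin e e A with hfdef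
  obtain ⟨b, hb⟩ := exists_basis_blockTriangular n (Fin n → ℂ)
    (by simp [Module.finrank_pi]) f
  refine ⟨⟨b.toMatrix ⇑e, e.toMatrix ⇑b,
    Basis.toMatrix_mul_toMatrix_flip _ _, Basis.toMatrix_mul_toMatrix_flip _ _⟩, ?_⟩
  show (b.toMatrix ⇑e * A * e.toMatrix ⇑b).BlockTriangular id
  have hA : A = LinearMap.toMatrix e e f := by rw [hfdef, LinearMap.toMatrix_toLin]
  rw [hA, basis_toMatrix_mul_linearMap_toMatrix_mul_basis_toMatrix]
  exact hb

lemma tendsto_inv_pow_zero (m : ℕ) (hm : 0 < m) :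
    Tendsto (fun k : ℕ => (((k : ℂ) + 1)⁻¹) ^ m) atTop (nhds 0) := by
  have h1 : Tendsto (fun k : ℕ => ((k : ℂ) + 1)⁻¹) atTop (nhds 0) := by
    rw [tendsto_zero_iff_norm_tendsto_zero]
    have : ∀ k : ℕ, ‖((k : ℂ) + 1)⁻¹‖ = 1 / ((k : ℝ) + 1) := by
      intro k
      rw [norm_inv, one_div]
      congr 1
      have : ((k : ℂ) + 1) = (((k + 1 : ℕ) : ℝ) : ℂ) := by push_cast; ring
      rw [this, Complex.norm_real, Real.norm_natCast]  -- may fail; fix later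
      push_cast; ring
    simp_rw [this]
    exact tendsto_one_div_add_atTop_nhds_zero_nat
  have := h1.pow m
  rwa [zero_pow hm.ne'] at this

lemma diag_mem_closure {A T : Matrix (Fin n) (Fin n) ℂ} (hT : T.BlockTriangular id)
    (h : GL (Fin n) ℂ)
    (hmem : T = (h : Matrix (Fin n) (Fin n) ℂ) * A *
      ((h⁻¹ : GL (Fin n) ℂ) : Matrix (Fin n) (Fin n) ℂ)) :
    diagonal T.diag ∈ closure {C : Matrix (Fin n) (Fin n) ℂ |
      ∃ g : GL (Fin n) ℂ, C = (g : Matrix (Fin n) (Fin n) ℂ) * A *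
        ((g⁻¹ : GL (Fin n) ℂ) : Matrix (Fin n) (Fin n) ℂ)} := by
  set c : ℕ → ℂ := fun k => (k : ℂ) + 1 with hcdef
  have hc0 : ∀ k, c k ≠ 0 := by
    intro k
    have : (0:ℝ) < (k:ℝ) + 1 := by positivity
    intro heq
    have := congrArg Complex.re heq
    simp [hcdef] at this
    linarith
  have hcc : ∀ k, c k * (c k)⁻¹ = 1 := fun k => mul_inv_cancel₀ (hc0 k)
  set u : ℕ → GL (Fin n) ℂ := fun k =>
    ⟨diagonal (fun i : Fin n => c k ^ (i : ℕ)),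
     diagonal (fun i : Fin n => ((c k)⁻¹) ^ (i : ℕ)),
     by rw [diagonal_mul_diagonal,
          show (fun i : Fin n => c k ^ (i:ℕ) * ((c k)⁻¹) ^ (i:ℕ)) = fun _ => 1 from
            funext fun i => by rw [← mul_pow, hcc, one_pow], diagonal_one],
     by rw [diagonal_mul_diagonal,
          show (fun i : Fin n => ((c k)⁻¹) ^ (i:ℕ) * c k ^ (i:ℕ)) = fun _ => 1 from
            funext fun i => by rw [← mul_pow, inv_mul_cancel₀ (hc0 k), one_pow],
          diagonal_one]⟩ with hudef
  have hseq : ∀ k : ℕ,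
      (diagonal (fun i : Fin n => c k ^ (i : ℕ)) * T *
        diagonal (fun i : Fin n => ((c k)⁻¹) ^ (i : ℕ))) ∈
      {C : Matrix (Fin n) (Fin n) ℂ |
        ∃ g : GL (Fin n) ℂ, C = (g : Matrix (Fin n) (Fin n) ℂ) * A *
          ((g⁻¹ : GL (Fin n) ℂ) : Matrix (Fin n) (Fin n) ℂ)} := by
    intro k
    refine ⟨u k * h, ?_⟩
    rw [_root_.mul_inv_rev, Units.val_mul, Units.val_mul, hmem]
    show _ = ((u k : GL (Fin n) ℂ) : Matrix (Fin n) (Fin n) ℂ) * (h : Matrix (Fin n) (Fin n) ℂ) * A * (((h⁻¹ : GL (Fin n) ℂ) : Matrix (Fin n) (Fin n) ℂ) * (((u k)⁻¹ : GL (Fin n) ℂ) : Matrix (Fin n) (Fin n) ℂ))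
    noncomm_ring
  have htend : Tendsto (fun k : ℕ =>
      diagonal (fun i : Fin n => c k ^ (i : ℕ)) * T *
        diagonal (fun i : Fin n => ((c k)⁻¹) ^ (i : ℕ))) atTop (nhds (diagonal T.diag)) := by
    refine tendsto_pi_nhds.mpr ?_
    intro i
    rw [tendsto_pi_nhds]
    intro j
    have hentry : ∀ k, (diagonal (fun i : Fin n => c k ^ (i : ℕ)) * T *
        diagonal (fun i : Fin n => ((c k)⁻¹) ^ (i : ℕ))) i j
        = c k ^ (i : ℕ) * T i j * ((c k)⁻¹) ^ (j : ℕ) := by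
      intro k
      rw [Matrix.mul_diagonal, Matrix.diagonal_mul]
    simp_rw [hentry]
    rcases lt_trichotomy (i : ℕ) (j : ℕ) with hlt | heq | hgt
    · have hij : i ≠ j := fun hh => by rw [hh] at hlt; exact lt_irrefl _ hlt
      rw [diagonal_apply_ne _ hij]
      have hrw : ∀ k, c k ^ (i : ℕ) * T i j * ((c k)⁻¹) ^ (j : ℕ)
          = T i j * ((c k)⁻¹) ^ ((j : ℕ) - (i : ℕ)) := by
        intro k
        have hj : (j : ℕ) = (i : ℕ) + ((j : ℕ) - (i : ℕ)) := by omega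
        conv_lhs => rw [hj, pow_add]
        rw [show c k ^ (i:ℕ) * T i j * (((c k)⁻¹) ^ (i:ℕ) * ((c k)⁻¹) ^ ((j:ℕ) - (i:ℕ)))
            = T i j * ((c k ^ (i:ℕ)) * ((c k)⁻¹) ^ (i:ℕ)) * ((c k)⁻¹) ^ ((j:ℕ) - (i:ℕ)) by ring]
        rw [← mul_pow, hcc, one_pow, mul_one]
      simp_rw [hrw]
      have := (tendsto_inv_pow_zero ((j : ℕ) - (i : ℕ)) (by omega)).const_mul (T i j)
      rwa [mul_zero] at this
    · have hij : i = j := Fin.ext heq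
      subst hij
      rw [diagonal_apply_eq]
      have hrw : ∀ k, c k ^ (i : ℕ) * T i i * ((c k)⁻¹) ^ (i : ℕ) = T.diag i := by
        intro k
        rw [show c k ^ (i:ℕ) * T i i * ((c k)⁻¹) ^ (i:ℕ)
            = T i i * ((c k ^ (i:ℕ)) * ((c k)⁻¹) ^ (i:ℕ)) by ring]
        rw [← mul_pow, hcc, one_pow, mul_one]
        rfl
      simp_rw [hrw]
      exact tendsto_const_nhds
    · have hij : i ≠ j := fun hh => by rw [hh] at hgt; exact lt_irrefl _ hgt
      rw [diagonal_apply_ne _ hij]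
      have hT0 : T i j = 0 := hT (by exact hgt)
      simp_rw [hT0, mul_zero, zero_mul]
      exact tendsto_const_nhds
  exact mem_closure_of_tendsto htend (Eventually.of_forall hseq)


variable {n : ℕ}

lemma multiset_map_succ (f : Fin (n + 1) → ℂ) :
    Multiset.map f Finset.univ.val =
      f 0 ::ₘ Multiset.map (f ∘ Fin.succ) Finset.univ.val := by
  rw [Fin.univ_succ, Finset.cons_val, Multiset.map_cons]
  congr 1
  rw [Finset.map_val, Multiset.map_map]
  rfl

lemma exists_perm_of_multiset_map_eq :
    ∀ {n : ℕ} (f g : Fin n → ℂ),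
      Multiset.map f Finset.univ.val = Multiset.map g Finset.univ.val →
      ∃ σ : Equiv.Perm (Fin n), g = f ∘ σ := by
  intro n
  induction n with
  | zero =>
    intro f g _
    exact ⟨Equiv.refl _, funext fun i => i.elim0⟩
  | succ n ih =>
    intro f g h
    have h0 : f 0 ∈ Multiset.map g Finset.univ.val := by
      rw [← h, multiset_map_succ]
      exact Multiset.mem_cons_self _ _
    obtain ⟨i₀, _, hi₀⟩ := Multiset.mem_map.mp h0
    set τ : Equiv.Perm (Fin (n + 1)) := Equiv.swap 0 i₀ with hτdef
    set g' : Fin (n + 1) → ℂ := g ∘ τ with hg'def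
    have hg'0 : g' 0 = f 0 := by
      rw [hg'def, Function.comp_apply, hτdef, Equiv.swap_apply_left, hi₀]
    have hperm : Multiset.map g' Finset.univ.val = Multiset.map g Finset.univ.val := by
      rw [hg'def, ← Multiset.map_map g ⇑τ, Multiset.map_univ_val_equiv]
    have h2 : Multiset.map (f ∘ Fin.succ) Finset.univ.val
        = Multiset.map (g' ∘ Fin.succ) Finset.univ.val := by
      have := h.trans hperm.symm
      rw [multiset_map_succ, multiset_map_succ g', hg'0] at this
      exact (Multiset.cons_inj_right _).mp this
    obtain ⟨σ', hσ'⟩ := ih (f ∘ Fin.succ) (g' ∘ Fin.succ) h2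
    set σ₀ : Equiv.Perm (Fin (n + 1)) := Equiv.Perm.decomposeFin.symm (0, σ') with hσ₀def
    have hg'σ : g' = f ∘ σ₀ := by
      funext x
      refine Fin.cases ?_ ?_ x
      · rw [Function.comp_apply, hσ₀def, Equiv.Perm.decomposeFin_symm_apply_zero, hg'0]
      · intro j
        rw [Function.comp_apply, hσ₀def, Equiv.Perm.decomposeFin_symm_apply_succ]
        rw [Equiv.swap_self, Equiv.refl_apply]
        simpa using congrFun hσ' j
    refine ⟨(τ.symm.trans σ₀ : Equiv.Perm (Fin (n+1))), ?_⟩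
    funext x
    have : g x = g' (τ.symm x) := by
      rw [hg'def, Function.comp_apply, Equiv.apply_symm_apply]
    rw [this, hg'σ]
    rfl

lemma exists_conj_diagonal_perm (d : Fin n → ℂ) (σ : Equiv.Perm (Fin n)) :
    ∃ g : GL (Fin n) ℂ,
      diagonal (d ∘ σ) = (g : Matrix (Fin n) (Fin n) ℂ) * diagonal d *
        ((g⁻¹ : GL (Fin n) ℂ) : Matrix (Fin n) (Fin n) ℂ) := by
  have hval : (σ.permMatrix ℂ) * (σ⁻¹.permMatrix ℂ) = 1 := by
    rw [← PEquiv.toMatrix_trans, ← Equiv.toPEquiv_trans]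
    have : σ.trans σ⁻¹ = Equiv.refl _ := Equiv.self_trans_symm σ
    rw [this, Equiv.toPEquiv_refl, PEquiv.toMatrix_refl]
  have hval' : (σ⁻¹.permMatrix ℂ) * (σ.permMatrix ℂ) = 1 := by
    rw [← PEquiv.toMatrix_trans, ← Equiv.toPEquiv_trans]
    have : σ⁻¹.trans σ = Equiv.refl _ := Equiv.symm_trans_self σ
    rw [this, Equiv.toPEquiv_refl, PEquiv.toMatrix_refl]
  refine ⟨⟨σ.permMatrix ℂ, σ⁻¹.permMatrix ℂ, hval, hval'⟩, ?_⟩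
  show diagonal (d ∘ σ) = σ.permMatrix ℂ * diagonal d * σ⁻¹.permMatrix ℂ
  rw [PEquiv.toMatrix_toPEquiv_mul, PEquiv.mul_toMatrix_toPEquiv]
  rw [show (σ⁻¹ : Equiv.Perm (Fin n)).symm = σ from rfl]
  rw [Matrix.submatrix_submatrix, Function.comp_id, Function.id_comp]
  rw [Matrix.submatrix_diagonal _ _ σ.injective]


variable {n : ℕ}

lemma roots_prod_X_sub_C_eq (d e : Fin n → ℂ)
    (h : (∏ i, (X - C (d i))) = ∏ i, (X - C (e i))) :
    Multiset.map d Finset.univ.val = Multiset.map e Finset.univ.val := by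
  have key : ∀ f : Fin n → ℂ,
      (∏ i, (X - C (f i))).roots = Multiset.map f Finset.univ.val := by
    intro f
    rw [Finset.prod_eq_multiset_prod,
      show Multiset.map (fun i => X - C (f i)) Finset.univ.val
        = Multiset.map (fun a => X - C a) (Multiset.map f Finset.univ.val) from
        (Multiset.map_map (fun a => X - C a) f Finset.univ.val).symm,
      Polynomial.roots_multiset_prod_X_sub_C]
  rw [← key d, ← key e, h]


/-- Two complex `n×n` matrices have intersecting orbit closures under the conjugation action
of `GLₙ(ℂ)` if and only if they have the same characteristic polynomial. -/
theorem conjugation_orbit_closures_intersect_iff_charpoly_eq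
    (n : ℕ) (A B : Matrix (Fin n) (Fin n) ℂ) :
    (closure {C : Matrix (Fin n) (Fin n) ℂ |
        ∃ g : GL (Fin n) ℂ, C = (g : Matrix (Fin n) (Fin n) ℂ) * A * ((g⁻¹ : GL (Fin n) ℂ) : Matrix (Fin n) (Fin n) ℂ)} ∩
      closure {C : Matrix (Fin n) (Fin n) ℂ |
        ∃ g : GL (Fin n) ℂ, C = (g : Matrix (Fin n) (Fin n) ℂ) * B * ((g⁻¹ : GL (Fin n) ℂ) : Matrix (Fin n) (Fin n) ℂ)}).Nonempty ↔
    A.charpoly = B.charpoly := by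
  constructor
  · rintro ⟨M, hMA, hMB⟩
    exact (charpoly_eq_of_mem_closure hMA).symm.trans (charpoly_eq_of_mem_closure hMB)
  · intro h
    obtain ⟨gA, hTA⟩ := exists_conj_blockTriangular A
    obtain ⟨gB, hTB⟩ := exists_conj_blockTriangular B
    set TA : Matrix (Fin n) (Fin n) ℂ :=
      (gA : Matrix (Fin n) (Fin n) ℂ) * A * ((gA⁻¹ : GL (Fin n) ℂ) : Matrix (Fin n) (Fin n) ℂ)
      with hTAdef
    set TB : Matrix (Fin n) (Fin n) ℂ :=
      (gB : Matrix (Fin n) (Fin n) ℂ) * B * ((gB⁻¹ : GL (Fin n) ℂ) : Matrix (Fin n) (Fin n) ℂ)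
      with hTBdef
    have hDA := diag_mem_closure hTA gA hTAdef
    have hDB := diag_mem_closure hTB gB hTBdef
    have huvA : (gA : Matrix (Fin n) (Fin n) ℂ) *
        ((gA⁻¹ : GL (Fin n) ℂ) : Matrix (Fin n) (Fin n) ℂ) = 1 := by
      rw [← Units.val_mul, mul_inv_cancel, Units.val_one]
    have huvB : (gB : Matrix (Fin n) (Fin n) ℂ) *
        ((gB⁻¹ : GL (Fin n) ℂ) : Matrix (Fin n) (Fin n) ℂ) = 1 := by
      rw [← Units.val_mul, mul_inv_cancel, Units.val_one]
    have hprod : (∏ i, (X - C (TA i i))) = ∏ i, (X - C (TB i i)) := by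
      rw [← Matrix.charpoly_of_upperTriangular TA hTA,
        ← Matrix.charpoly_of_upperTriangular TB hTB,
        hTAdef, hTBdef, charpoly_conj_eq huvA, charpoly_conj_eq huvB, h]
    have hmult := roots_prod_X_sub_C_eq (fun i => TA i i) (fun i => TB i i) hprod
    obtain ⟨σ, hσ⟩ := exists_perm_of_multiset_map_eq _ _ hmult
    obtain ⟨g, hg⟩ := exists_conj_diagonal_perm (fun i => TA i i) σ
    have hdiagB : diagonal TB.diag = diagonal ((fun i => TA i i) ∘ σ) := by
      rw [← hσ]; rfl
    refine ⟨diagonal TB.diag, ?_, hDB⟩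
    rw [hdiagB, hg]
    exact conj_mem_closure g hDA
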